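/- For every finite nonempty poset A there exist n ∈ ℕ, a polyhedron P ⊆ ℝⁿ with dim P = depth A, and an injective map g from the upper sets of A to the open subpolyhedra of P such that g(∅) = ∅, g(A) = P, g(U ∪ V) = g(U) ∪ g(V), g(U ∩ V) = g(U) ∩ g(V), and g(U ⇨ V) = int_P((P \ g(U)) ∪ g(V)) for all upper sets U, V of A, where U ⇨ V denotes the Heyting implication of upper sets (the largest upper set W of A with U ∩ W ⊆ V) and int_P is interior in the subspace P. In other words, the Heyting algebra of upper sets of A embeds into the Heyting algebra of open subpolyhedra of a polyhedron of dimension equal to the depth of A. -/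

import Mathlib

open Set

/-- A polytope in ℝⁿ: the convex hull of a finite set of points. -/
def IsPolytope {n : ℕ} (s : Set (Fin n → ℝ)) : Prop :=
  ∃ V : Finset (Fin n → ℝ), s = convexHull ℝ (V : Set (Fin n → ℝ))

/-- A polyhedron in ℝⁿ: a finite union of polytopes. -/
def IsPolyhedron {n : ℕ} (P : Set (Fin n → ℝ)) : Prop :=
  ∃ S : Set (Set (Fin n → ℝ)), S.Finite ∧ (∀ s ∈ S, IsPolytope s) ∧ P = ⋃₀ S

/-- A simplex in ℝⁿ: the convex hull of a nonempty finite affinely independent set. -/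
def IsSimplex {n : ℕ} (s : Set (Fin n → ℝ)) : Prop :=
  ∃ V : Finset (Fin n → ℝ), V.Nonempty ∧
    AffineIndependent ℝ (fun x : {x : Fin n → ℝ // x ∈ V} => x.val) ∧
    s = convexHull ℝ (V : Set (Fin n → ℝ))

/-- `IsFaceOf s t`: `t` is a simplex with vertex set `W` and `s` is the convex hull
of a nonempty subset of `W`. -/
def IsFaceOf {n : ℕ} (s t : Set (Fin n → ℝ)) : Prop :=
  ∃ W V : Finset (Fin n → ℝ), W.Nonempty ∧
    AffineIndependent ℝ (fun x : {x : Fin n → ℝ // x ∈ W} => x.val) ∧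
    t = convexHull ℝ (W : Set (Fin n → ℝ)) ∧
    V.Nonempty ∧ V ⊆ W ∧ s = convexHull ℝ (V : Set (Fin n → ℝ))

/-- A triangulation in ℝⁿ: a finite set of simplices closed under taking faces, such that
any two members intersect in a common face (or not at all). -/
structure IsTriangulation {n : ℕ} (K : Set (Set (Fin n → ℝ))) : Prop where
  finite : K.Finite
  simplex : ∀ s ∈ K, IsSimplex s
  face_mem : ∀ s ∈ K, ∀ t, IsFaceOf t s → t ∈ K
  inter : ∀ s ∈ K, ∀ t ∈ K, s ∩ t = ∅ ∨ (IsFaceOf (s ∩ t) s ∧ IsFaceOf (s ∩ t) t)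

/-- A set of simplices closed under taking faces. -/
def FaceClosed {n : ℕ} (D : Set (Set (Fin n → ℝ))) : Prop :=
  ∀ s ∈ D, ∀ t, IsFaceOf t s → t ∈ D

/-- A `K`-definable polyhedron: the union of a face-closed subset of `K`. -/
def SigmaDefinable {n : ℕ} (K : Set (Set (Fin n → ℝ))) (C : Set (Fin n → ℝ)) : Prop :=
  ∃ D ⊆ K, FaceClosed D ∧ C = ⋃₀ D

/-- A `K`-definable open set: the complement in `|K| = ⋃₀ K` of a `K`-definable polyhedron. -/
def SigmaDefOpen {n : ℕ} (K : Set (Set (Fin n → ℝ))) (O : Set (Fin n → ℝ)) : Prop :=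
  ∃ C, SigmaDefinable K C ∧ O = ⋃₀ K \ C

/-- The open star of a simplex `s` in a triangulation `K`. -/
def openStar {n : ℕ} (K : Set (Set (Fin n → ℝ))) (s : Set (Fin n → ℝ)) : Set (Fin n → ℝ) :=
  ⋃ t ∈ {t ∈ K | s ⊆ t}, intrinsicInterior ℝ t

/-- The interior of `S` in the subspace topology of `P`, viewed as a subset of ℝⁿ. -/
def intSub {n : ℕ} (P S : Set (Fin n → ℝ)) : Set (Fin n → ℝ) :=
  Subtype.val '' interior (Subtype.val ⁻¹' S : Set P)

/-- An open subpolyhedron of a polyhedron `P`: a subset of `P` whose complement in `P`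
is a polyhedron. -/
def IsOpenSubpoly {n : ℕ} (P O : Set (Fin n → ℝ)) : Prop :=
  O ⊆ P ∧ IsPolyhedron (P \ O)

/-- `s` is a simplex with exactly `k` (affinely independent) vertices. -/
def SimplexWithCard {n : ℕ} (s : Set (Fin n → ℝ)) (k : ℕ) : Prop :=
  ∃ V : Finset (Fin n → ℝ), V.Nonempty ∧
    AffineIndependent ℝ (fun x : {x : Fin n → ℝ // x ∈ V} => x.val) ∧
    s = convexHull ℝ (V : Set (Fin n → ℝ)) ∧ V.card = k

/-- `P` contains a simplex with `d+1` affinely independent vertices, and no simplex with more;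
i.e. the polyhedron `P` has dimension exactly `d`. -/
def PolyDimEq {n : ℕ} (P : Set (Fin n → ℝ)) (d : ℕ) : Prop :=
  (∃ V : Finset (Fin n → ℝ), V.Nonempty ∧
      AffineIndependent ℝ (fun x : {x : Fin n → ℝ // x ∈ V} => x.val) ∧
      convexHull ℝ (V : Set (Fin n → ℝ)) ⊆ P ∧ V.card = d + 1) ∧
  (∀ V : Finset (Fin n → ℝ),
      AffineIndependent ℝ (fun x : {x : Fin n → ℝ // x ∈ V} => x.val) →
      convexHull ℝ (V : Set (Fin n → ℝ)) ⊆ P → V.card ≤ d + 1)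

/-- The polyhedron `P` has dimension at most `d`. -/
def PolyDimLE {n : ℕ} (P : Set (Fin n → ℝ)) (d : ℕ) : Prop :=
  ∀ V : Finset (Fin n → ℝ),
    AffineIndependent ℝ (fun x : {x : Fin n → ℝ // x ∈ V} => x.val) →
    convexHull ℝ (V : Set (Fin n → ℝ)) ⊆ P → V.card ≤ d + 1

/-- The triangulation `K` has combinatorial dimension exactly `d`. -/
def TriangDimEq {n : ℕ} (K : Set (Set (Fin n → ℝ))) (d : ℕ) : Prop :=
  (∃ s ∈ K, SimplexWithCard s (d + 1)) ∧
  (∀ s ∈ K, ∀ k, SimplexWithCard s k → k ≤ d + 1)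

/-- The bounded-depth terms: `bdTerm P k V = V k ∪ (V k ⇨ bdTerm P (k-1) V)`,
where `U ⇨ W = int_P ((P \ U) ∪ W)` is the Heyting implication of open subsets of `P`. -/
def bdTerm {n : ℕ} (P : Set (Fin n → ℝ)) :
    (k : ℕ) → (Fin (k + 1) → Set (Fin n → ℝ)) → Set (Fin n → ℝ)
  | 0, V => V 0 ∪ intSub P (P \ V 0)
  | k + 1, V => V (Fin.last (k + 1)) ∪
      intSub P ((P \ V (Fin.last (k + 1))) ∪ bdTerm P k (fun i => V i.castSucc))

/-- The finite poset `A` has depth exactly `d`: it has a chain of cardinality `d+1`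
and no longer chain. -/
def depthEq (A : Type) [PartialOrder A] (d : ℕ) : Prop :=
  (∃ C : Finset A, IsChain (· ≤ ·) (C : Set A) ∧ C.card = d + 1) ∧
  (∀ C : Finset A, IsChain (· ≤ ·) (C : Set A) → C.card ≤ d + 1)

/-- An upper set of the poset `(K, ⊆)`. -/
def UpperSetOf {n : ℕ} (K U : Set (Set (Fin n → ℝ))) : Prop :=
  U ⊆ K ∧ ∀ s ∈ U, ∀ t ∈ K, s ⊆ t → t ∈ U

/-- The map sending an upper set of a triangulation to the union of the relative
interiors of its members. -/
def gammaUp {n : ℕ} (U : Set (Set (Fin n → ℝ))) : Set (Fin n → ℝ) :=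
  ⋃ s ∈ U, intrinsicInterior ℝ s
namespace PolyEmbed
variable {A : Type} [PartialOrder A] [Fintype A]

noncomputable def eqv (A : Type) [Fintype A] : A ≃ Fin (Fintype.card A) := Fintype.equivFin A

noncomputable def vert (a : A) : Fin (Fintype.card A) → ℝ := Pi.single (eqv A a) 1

def Pset (A : Type) [PartialOrder A] [Fintype A] : Set (Fin (Fintype.card A) → ℝ) :=
  {x | (∀ i, 0 ≤ x i) ∧ ∑ i, x i = 1 ∧ IsChain (· ≤ ·) {a : A | 0 < x (eqv A a)}}

lemma vert_injective : Function.Injective (vert (A := A)) := by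
  intro a b h
  by_contra hab
  have := congrFun h (eqv A a)
  simp only [vert, Pi.single_apply, if_pos rfl] at this
  rw [if_neg (fun h' : eqv A a = eqv A b => hab ((eqv A).injective h'))] at this
  norm_num at this

lemma sum_eqv (x : Fin (Fintype.card A) → ℝ) : ∑ a : A, x (eqv A a) = ∑ i, x i :=
  Fintype.sum_equiv (eqv A) _ _ (fun _ => rfl)

lemma mem_hull_iff (C : Finset A) (x : Fin (Fintype.card A) → ℝ) :
    x ∈ convexHull ℝ ((C.image vert : Finset _) : Set (Fin (Fintype.card A) → ℝ)) ↔
      (∀ i, 0 ≤ x i) ∧ ∑ i, x i = 1 ∧ ∀ a : A, 0 < x (eqv A a) → a ∈ C := by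
  classical
  constructor
  · intro hx
    have hQ : Convex ℝ {y : Fin (Fintype.card A) → ℝ |
        (∀ i, 0 ≤ y i) ∧ ∑ i, y i = 1 ∧ ∀ a : A, 0 < y (eqv A a) → a ∈ C} := by
      intro y hy z hz s t hs ht hst
      refine ⟨fun i => add_nonneg (mul_nonneg hs (hy.1 i)) (mul_nonneg ht (hz.1 i)), ?_, ?_⟩
      · simp only [Pi.add_apply, Pi.smul_apply, smul_eq_mul]
        rw [Finset.sum_add_distrib, ← Finset.mul_sum, ← Finset.mul_sum, hy.2.1, hz.2.1]
        simpa using hst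
      · intro a ha
        simp only [Pi.add_apply, Pi.smul_apply, smul_eq_mul] at ha
        by_contra haC
        have h1 : y (eqv A a) = 0 := by
          rcases (hy.1 (eqv A a)).lt_or_eq with h | h
          · exact absurd (hy.2.2 a h) haC
          · exact h.symm
        have h2 : z (eqv A a) = 0 := by
          rcases (hz.1 (eqv A a)).lt_or_eq with h | h
          · exact absurd (hz.2.2 a h) haC
          · exact h.symm
        rw [h1, h2] at ha; simp at ha
    refine convexHull_min ?_ hQ hx
    intro v hv
    simp only [Finset.coe_image, Set.mem_image, Finset.mem_coe] at hv
    obtain ⟨a, haC, rfl⟩ := hv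
    refine ⟨fun i => ?_, ?_, ?_⟩
    · simp only [vert, Pi.single_apply]; split <;> norm_num
    · simp [vert, Pi.single_apply]
    · intro b hb
      simp only [vert, Pi.single_apply] at hb
      split_ifs at hb with h
      · rwa [(eqv A).injective h]
      · norm_num at hb
  · rintro ⟨hnn, hsum, hsupp⟩
    have hzero : ∀ a : A, a ∉ C → x (eqv A a) = 0 := by
      intro a ha
      rcases (hnn (eqv A a)).lt_or_eq with h | h
      · exact absurd (hsupp a h) ha
      · exact h.symm
    have hsumC : ∑ a ∈ C, x (eqv A a) = 1 := by
      rw [Finset.sum_subset (Finset.subset_univ C) (fun a _ ha => hzero a ha)]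
      rw [sum_eqv]; exact hsum
    have hx : x = C.centerMass (fun a => x (eqv A a)) vert := by
      rw [Finset.centerMass, hsumC, inv_one, one_smul]
      funext j
      rw [Finset.sum_apply]
      rcases em ((eqv A).symm j ∈ C) with hj | hj
      · rw [Finset.sum_eq_single_of_mem ((eqv A).symm j) hj]
        · simp [vert]
        · intro b hb hbne
          simp only [Pi.smul_apply, vert, Pi.single_apply, smul_eq_mul]
          rw [if_neg, mul_zero]
          intro h; exact hbne (by rw [← (eqv A).symm_apply_apply b, h, Equiv.symm_apply_apply] )
      · rw [Finset.sum_eq_zero, ← hzero _ hj]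
        · simp
        · intro b hb
          simp only [Pi.smul_apply, vert, Pi.single_apply, smul_eq_mul]
          rw [if_neg, mul_zero]
          intro h; exact hj (by rw [h, Equiv.symm_apply_apply]; exact hb)
    rw [hx]
    refine Finset.centerMass_mem_convexHull _ (fun a ha => hnn _) (by rw [hsumC]; norm_num) ?_
    intro a ha
    simp only [Finset.coe_image, Set.mem_image, Finset.mem_coe]
    exact ⟨a, ha, rfl⟩

end PolyEmbed

namespace PolyEmbed
set_option linter.unusedSectionVars false
variable {A : Type} [PartialOrder A] [Fintype A]

lemma chain_exists_greatest {s : Set A} (hs : IsChain (· ≤ ·) s) (hne : s.Nonempty) :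
    ∃ a ∈ s, ∀ b ∈ s, b ≤ a := by
  obtain ⟨a, ha, hmax⟩ := Set.Finite.exists_maximalFor id s (Set.toFinite s) hne
  refine ⟨a, ha, fun b hb => ?_⟩
  rcases eq_or_ne b a with rfl | hba
  · exact le_rfl
  · rcases hs hb ha hba with h | h
    · exact h
    · exact hmax hb h

variable [Nonempty A]

lemma exists_greatest_of_mem_Pset {x} (hx : x ∈ Pset A) :
    ∃ a : A, 0 < x (eqv A a) ∧ ∀ b : A, 0 < x (eqv A b) → b ≤ a := by
  have hne : {a : A | 0 < x (eqv A a)}.Nonempty := by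
    rcases Set.eq_empty_or_nonempty {a : A | 0 < x (eqv A a)} with h | h
    · exfalso
      have hz : ∀ a : A, x (eqv A a) = 0 := fun a =>
        le_antisymm (not_lt.1 fun hlt => Set.eq_empty_iff_forall_notMem.1 h a hlt) (hx.1 _)
      have hs := hx.2.1
      rw [← sum_eqv] at hs
      simp [hz] at hs
    · exact h
  obtain ⟨a, ha, hg⟩ := chain_exists_greatest hx.2.2 hne
  exact ⟨a, ha, hg⟩

open Classical in
noncomputable def mx (x : Fin (Fintype.card A) → ℝ) : A :=
  if h : ∃ a : A, 0 < x (eqv A a) ∧ ∀ b : A, 0 < x (eqv A b) → b ≤ a then h.choose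
  else Classical.arbitrary A

lemma mx_spec {x} (hx : x ∈ Pset A) :
    0 < x (eqv A (mx x)) ∧ ∀ b : A, 0 < x (eqv A b) → b ≤ mx x := by
  have h := exists_greatest_of_mem_Pset hx
  rw [mx, dif_pos h]
  exact h.choose_spec

lemma mx_eq {x} (hx : x ∈ Pset A) {a : A} (ha : 0 < x (eqv A a))
    (hg : ∀ b : A, 0 < x (eqv A b) → b ≤ a) : mx x = a :=
  le_antisymm (hg _ (mx_spec hx).1) ((mx_spec hx).2 a ha)

def gSet (U : Set A) : Set (Fin (Fintype.card A) → ℝ) := {x ∈ Pset A | mx x ∈ U}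

lemma supp_vert (a : A) : {b : A | 0 < vert a (eqv A b)} = {a} := by
  ext b
  simp only [Set.mem_setOf_eq, vert, Pi.single_apply, Set.mem_singleton_iff]
  constructor
  · intro h; split_ifs at h with hba
    · exact (eqv A).injective hba
    · norm_num at h
  · rintro rfl; simp

lemma vert_mem_Pset (a : A) : vert a ∈ Pset A := by
  refine ⟨fun i => ?_, ?_, ?_⟩
  · simp only [vert, Pi.single_apply]; split <;> norm_num
  · simp [vert, Pi.single_apply]
  · rw [supp_vert]
    intro y hy z hz hyz
    exact absurd (hy.trans hz.symm) hyz

lemma mx_vert (a : A) : mx (vert a) = a := by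
  refine mx_eq (vert_mem_Pset a) ?_ ?_
  · have : a ∈ ({a} : Set A) := rfl
    rw [← supp_vert a] at this; exact this
  · intro b hb
    have : b ∈ ({a} : Set A) := by rw [← supp_vert a]; exact hb
    rw [this]

/-- Decomposition of sublevel sets of `mx` as unions of simplices. -/
lemma gset_decomp (Q : A → Prop) (hQ : ∀ a b : A, a ≤ b → Q b → Q a) :
    {x ∈ Pset A | Q (mx x)} = ⋃₀ ((fun C : Finset A => convexHull ℝ ((C.image vert : Finset _) :
        Set (Fin (Fintype.card A) → ℝ))) ''
      {C : Finset A | C.Nonempty ∧ IsChain (· ≤ ·) (C : Set A) ∧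
        ∃ m ∈ C, (∀ b ∈ C, b ≤ m) ∧ Q m}) := by
  classical
  ext x
  simp only [Set.mem_sUnion, Set.mem_image, Set.mem_setOf_eq]
  constructor
  · rintro ⟨hx, hQx⟩
    set C := Finset.univ.filter (fun a => 0 < x (eqv A a)) with hC
    have hmem : ∀ a : A, a ∈ C ↔ 0 < x (eqv A a) := by intro a; simp [hC]
    have hCcoe : (C : Set A) = {a : A | 0 < x (eqv A a)} := by ext a; simp [hC]
    refine ⟨_, ⟨C, ⟨⟨mx x, (hmem _).2 (mx_spec hx).1⟩, by rw [hCcoe]; exact hx.2.2,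
      ⟨mx x, (hmem _).2 (mx_spec hx).1, fun b hb => (mx_spec hx).2 b ((hmem b).1 hb),
        hQx⟩⟩, rfl⟩, ?_⟩
    rw [mem_hull_iff]
    exact ⟨hx.1, hx.2.1, fun a ha => (hmem a).2 ha⟩
  · rintro ⟨s, ⟨C, ⟨hCne, hCchain, m, hmC, hmg, hQm⟩, rfl⟩, hxs⟩
    rw [mem_hull_iff] at hxs
    obtain ⟨hnn, hsum, hsupp⟩ := hxs
    have hxP : x ∈ Pset A :=
      ⟨hnn, hsum, hCchain.mono (fun a ha => hsupp a ha)⟩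
    refine ⟨hxP, hQ _ m ?_ hQm⟩
    exact hmg _ (hsupp _ (mx_spec hxP).1)

end PolyEmbed


namespace PolyEmbed
set_option linter.unusedSectionVars false
variable {A : Type} [PartialOrder A] [Fintype A] [Nonempty A]

lemma isPolyhedron_decomp (Phi : Finset A → Prop) :
    IsPolyhedron (⋃₀ ((fun C : Finset A => convexHull ℝ ((C.image vert : Finset _) :
      Set (Fin (Fintype.card A) → ℝ))) '' {C | Phi C})) := by
  refine ⟨_, (Set.toFinite {C : Finset A | Phi C}).image _, ?_, rfl⟩
  rintro s ⟨C, -, rfl⟩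
  exact ⟨C.image vert, rfl⟩

lemma isClosed_decomp (Phi : Finset A → Prop) :
    IsClosed (⋃₀ ((fun C : Finset A => convexHull ℝ ((C.image vert : Finset _) :
      Set (Fin (Fintype.card A) → ℝ))) '' {C | Phi C})) := by
  rw [Set.sUnion_eq_biUnion]
  refine Set.Finite.isClosed_biUnion ((Set.toFinite {C : Finset A | Phi C}).image _) ?_
  rintro s ⟨C, -, rfl⟩
  exact ((C.image vert).finite_toSet.isCompact_convexHull ℝ).isClosed

lemma diff_gSet (U : Set A) : Pset A \ gSet U = {x ∈ Pset A | mx x ∉ U} := by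
  ext x; simp only [gSet, Set.mem_diff, Set.mem_setOf_eq]; tauto

lemma affineIndependent_vert : AffineIndependent ℝ (vert (A := A)) := by
  rw [affineIndependent_iff]
  intro s w hw0 hsum e he
  have := congrFun hsum (eqv A e)
  rw [Finset.sum_apply] at this
  rw [Finset.sum_eq_single_of_mem e he] at this
  · simpa [vert] using this
  · intro b hb hbe
    simp only [Pi.smul_apply, vert, Pi.single_apply, smul_eq_mul]
    rw [if_neg (fun h => hbe (((eqv A).injective h).symm)), mul_zero]

lemma affineIndependent_verts {V : Finset (Fin (Fintype.card A) → ℝ)}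
    (hV : (V : Set (Fin (Fintype.card A) → ℝ)) ⊆ Set.range vert) :
    AffineIndependent ℝ (fun x : {x : Fin (Fintype.card A) → ℝ // x ∈ V} => x.val) :=
  ((affineIndependent_vert.range).mono hV)

lemma hull_subset_Pset {C : Finset A} (hC : IsChain (· ≤ ·) (C : Set A)) :
    convexHull ℝ ((C.image vert : Finset _) : Set (Fin (Fintype.card A) → ℝ)) ⊆ Pset A := by
  intro x hx
  rw [mem_hull_iff] at hx
  exact ⟨hx.1, hx.2.1, hC.mono (fun a ha => hx.2.2 a ha)⟩

lemma mem_intSub_iff {n : ℕ} {P S : Set (Fin n → ℝ)} {x : Fin n → ℝ} :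
    x ∈ intSub P S ↔ x ∈ P ∧ ∃ U : Set (Fin n → ℝ), IsOpen U ∧ x ∈ U ∧ P ∩ U ⊆ S := by
  constructor
  · rintro ⟨x', hxi, rfl⟩
    refine ⟨x'.2, ?_⟩
    rw [mem_interior_iff_mem_nhds, mem_nhds_subtype] at hxi
    obtain ⟨t, ht, hts⟩ := hxi
    obtain ⟨U, hUt, hU, hxU⟩ := mem_nhds_iff.1 ht
    exact ⟨U, hU, hxU, fun y hy => hts (show (⟨y, hy.1⟩ : P) ∈ _ from hUt hy.2)⟩
  · rintro ⟨hxP, U, hU, hxU, hPU⟩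
    refine ⟨⟨x, hxP⟩, ?_, rfl⟩
    rw [mem_interior_iff_mem_nhds, mem_nhds_subtype]
    exact ⟨U, hU.mem_nhds hxU, fun y hy => hPU ⟨y.2, hy⟩⟩

lemma subset_intSub {n : ℕ} {P S O K : Set (Fin n → ℝ)} (hK : IsClosed K)
    (hO : O = P \ K) (hOS : O ⊆ S) : O ⊆ intSub P S := by
  intro x hx
  rw [mem_intSub_iff]
  subst hO
  exact ⟨hx.1, Kᶜ, hK.isOpen_compl, hx.2, fun y hy => hOS ⟨hy.1, hy.2⟩⟩

end PolyEmbed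


/-- For every finite nonempty poset `A` (of depth `d`) there are `n ∈ ℕ`,
a polyhedron `P ⊆ ℝⁿ` with `dim P = depth A`, and an injective map `g` from the upper sets
of `A` to the open subpolyhedra of `P` preserving `∅`, the top element, binary unions,
binary intersections, and Heyting implication; i.e. the Heyting algebra of upper sets of `A`
embeds into the Heyting algebra of open subpolyhedra of a polyhedron whose dimension is the
depth of `A`. -/
theorem upperSets_embed_polyhedron {A : Type} [PartialOrder A] [Fintype A] [Nonempty A]
    {d : ℕ} (hd : depthEq A d) :
    ∃ (n : ℕ) (P : Set (Fin n → ℝ)) (g : Set A → Set (Fin n → ℝ)),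
      IsPolyhedron P ∧ P.Nonempty ∧ PolyDimEq P d ∧
      (∀ U : Set A, IsUpperSet U → IsOpenSubpoly P (g U)) ∧
      (∀ U V : Set A, IsUpperSet U → IsUpperSet V → g U = g V → U = V) ∧
      g ∅ = ∅ ∧ g Set.univ = P ∧
      (∀ U V : Set A, IsUpperSet U → IsUpperSet V → g (U ∪ V) = g U ∪ g V) ∧
      (∀ U V : Set A, IsUpperSet U → IsUpperSet V → g (U ∩ V) = g U ∩ g V) ∧
      (∀ U V : Set A, IsUpperSet U → IsUpperSet V →
        g {a | ∀ b, a ≤ b → b ∈ U → b ∈ V} = intSub P ((P \ g U) ∪ g V)) := by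
  classical
  obtain ⟨hd1, hd2⟩ := hd
  refine ⟨Fintype.card A, PolyEmbed.Pset A, PolyEmbed.gSet, ?_, ?_, ?_, ?_, ?_, ?_, ?_, ?_, ?_, ?_⟩
  · -- IsPolyhedron P
    have h := PolyEmbed.gset_decomp (A := A) (fun _ => True) (fun _ _ _ _ => trivial)
    have h2 : {x ∈ PolyEmbed.Pset A | True} = PolyEmbed.Pset A := by simp
    rw [h2] at h
    rw [h]
    exact PolyEmbed.isPolyhedron_decomp _
  · exact ⟨_, PolyEmbed.vert_mem_Pset (Classical.arbitrary A)⟩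
  · constructor
    · obtain ⟨C, hCchain, hCcard⟩ := hd1
      refine ⟨C.image PolyEmbed.vert, ?_, ?_, ?_, ?_⟩
      · exact (Finset.card_pos.1 (by omega)).image _
      · refine PolyEmbed.affineIndependent_verts ?_
        rintro v hv
        simp only [Finset.coe_image, Set.mem_image, Finset.mem_coe] at hv
        obtain ⟨a, -, rfl⟩ := hv
        exact ⟨a, rfl⟩
      · exact PolyEmbed.hull_subset_Pset hCchain
      · rw [Finset.card_image_of_injective _ PolyEmbed.vert_injective]; exact hCcard
    · intro V hVind hVsub
      rcases V.eq_empty_or_nonempty with rfl | hVne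
      · simp
      set b : Fin (Fintype.card A) → ℝ := (V.card : ℝ)⁻¹ • ∑ v ∈ V, v with hbdef
      have hbmem : b ∈ convexHull ℝ (V : Set (Fin (Fintype.card A) → ℝ)) := by
        have h := Finset.centerMass_mem_convexHull V (w := fun _ => (1:ℝ))
          (z := id) (fun i _ => zero_le_one)
          (by simpa using (Nat.cast_pos.2 hVne.card_pos : (0:ℝ) < V.card))
          (fun i hi => hi)
        simpa [Finset.centerMass, hbdef] using h
      have hbP := hVsub hbmem
      have hVP : ∀ v ∈ V, v ∈ PolyEmbed.Pset A := fun v hv =>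
        hVsub (subset_convexHull ℝ _ hv)
      set C : Finset A := Finset.univ.filter (fun a => 0 < b (PolyEmbed.eqv A a)) with hCdef
      have hCchain : IsChain (· ≤ ·) (C : Set A) := by
        have h : (C : Set A) = {a : A | 0 < b (PolyEmbed.eqv A a)} := by ext a; simp [hCdef]
        rw [h]; exact hbP.2.2
      have hsupp : ∀ v ∈ V, ∀ a : A, 0 < v (PolyEmbed.eqv A a) → a ∈ C := by
        intro v hv a ha
        simp only [hCdef, Finset.mem_filter, Finset.mem_univ, true_and]
        have hb2 : b (PolyEmbed.eqv A a) = (V.card : ℝ)⁻¹ * ∑ w ∈ V, w (PolyEmbed.eqv A a) := by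
          simp [hbdef, Finset.sum_apply]
        rw [hb2]
        exact mul_pos (inv_pos.2 (Nat.cast_pos.2 hVne.card_pos))
          (Finset.sum_pos' (fun w hw => (hVP w hw).1 _) ⟨v, hv, ha⟩)
      have hVhull : (V : Set (Fin (Fintype.card A) → ℝ)) ⊆
          convexHull ℝ ((C.image PolyEmbed.vert : Finset _) : Set (Fin (Fintype.card A) → ℝ)) := by
        intro v hv
        rw [PolyEmbed.mem_hull_iff]
        exact ⟨(hVP v hv).1, (hVP v hv).2.1, fun a ha => hsupp v hv a ha⟩
      have hcard := AffineIndependent.card_le_card_of_subset_affineSpan hVind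
        (hVhull.trans (convexHull_subset_affineSpan _))
      calc V.card ≤ (C.image PolyEmbed.vert).card := hcard
        _ ≤ C.card := Finset.card_image_le
        _ ≤ d + 1 := hd2 C hCchain
  · intro U hU
    refine ⟨fun x hx => hx.1, ?_⟩
    rw [PolyEmbed.diff_gSet]
    rw [PolyEmbed.gset_decomp (fun a => a ∉ U) (fun a b hab hb ha => hb (hU hab ha))]
    exact PolyEmbed.isPolyhedron_decomp _
  · intro U V hU hV h
    ext a
    have h1 : PolyEmbed.vert a ∈ PolyEmbed.gSet U ↔ a ∈ U := by
      simp [PolyEmbed.gSet, PolyEmbed.vert_mem_Pset a, PolyEmbed.mx_vert a]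
    have h2 : PolyEmbed.vert a ∈ PolyEmbed.gSet V ↔ a ∈ V := by
      simp [PolyEmbed.gSet, PolyEmbed.vert_mem_Pset a, PolyEmbed.mx_vert a]
    rw [← h1, h, h2]
  · ext x; simp [PolyEmbed.gSet]
  · ext x; simp [PolyEmbed.gSet]
  · intro U V _ _; ext x
    simp only [PolyEmbed.gSet, Set.mem_setOf_eq, Set.mem_union, Set.mem_inter_iff]
    tauto
  · intro U V _ _; ext x
    simp only [PolyEmbed.gSet, Set.mem_setOf_eq, Set.mem_union, Set.mem_inter_iff]
    tauto
  · intro U V hU hV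
    have hdec : {x ∈ PolyEmbed.Pset A | ∃ b, PolyEmbed.mx x ≤ b ∧ b ∈ U ∧ b ∉ V} =
        ⋃₀ ((fun C : Finset A => convexHull ℝ ((C.image PolyEmbed.vert : Finset _) :
            Set (Fin (Fintype.card A) → ℝ))) ''
          {C : Finset A | C.Nonempty ∧ IsChain (· ≤ ·) (C : Set A) ∧
            ∃ m ∈ C, (∀ b ∈ C, b ≤ m) ∧ ∃ b, m ≤ b ∧ b ∈ U ∧ b ∉ V}) :=
      PolyEmbed.gset_decomp (A := A) (fun a => ∃ b, a ≤ b ∧ b ∈ U ∧ b ∉ V)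
        (fun a b hab h => h.elim (fun c hc => ⟨c, hab.trans hc.1, hc.2⟩))
    have hO : PolyEmbed.gSet {a : A | ∀ b, a ≤ b → b ∈ U → b ∈ V} = PolyEmbed.Pset A \
        {x ∈ PolyEmbed.Pset A | ∃ b, PolyEmbed.mx x ≤ b ∧ b ∈ U ∧ b ∉ V} := by
      ext x
      simp only [PolyEmbed.gSet, Set.mem_diff, Set.mem_setOf_eq]
      constructor
      · rintro ⟨hxP, hxW⟩
        exact ⟨hxP, fun h => h.2.elim (fun c hc => hc.2.2 (hxW c hc.1 hc.2.1))⟩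
      · rintro ⟨hxP, hnx⟩
        refine ⟨hxP, fun c hc hcU => ?_⟩
        by_contra hcV
        exact hnx ⟨hxP, c, hc, hcU, hcV⟩
    apply Set.Subset.antisymm
    · have hO2 := hO.trans (congrArg (PolyEmbed.Pset A \ ·) hdec)
      refine PolyEmbed.subset_intSub (PolyEmbed.isClosed_decomp _) hO2 ?_
      rintro x ⟨hxP, hxW⟩
      by_cases hmU : PolyEmbed.mx x ∈ U
      · exact Or.inr ⟨hxP, hxW _ le_rfl hmU⟩
      · exact Or.inl ⟨hxP, fun h => hmU h.2⟩
    · intro x hx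
      rw [PolyEmbed.mem_intSub_iff] at hx
      obtain ⟨hxP, U₀, hU₀, hxU₀, hPU₀⟩ := hx
      refine ⟨hxP, ?_⟩
      intro b hb hbU
      by_contra hbV
      set f : ℝ → (Fin (Fintype.card A) → ℝ) :=
        fun t => x + t • (PolyEmbed.vert b - x) with hf
      have hchain : IsChain (· ≤ ·)
          (insert b {a : A | 0 < x (PolyEmbed.eqv A a)}) := by
        refine (hxP.2.2).insert ?_
        intro c hc _
        exact Or.inr (((PolyEmbed.mx_spec hxP).2 c hc).trans hb)
      have hfP : ∀ t ∈ Set.Ioo (0:ℝ) 1,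
          f t ∈ PolyEmbed.Pset A ∧ PolyEmbed.mx (f t) = b := by
        intro t ht
        have ht0 : (0:ℝ) < t := ht.1
        have ht1 : t < 1 := ht.2
        have hco : ∀ i, f t i = (1 - t) * x i + t * PolyEmbed.vert b i := by
          intro i
          simp only [hf, Pi.add_apply, Pi.smul_apply, Pi.sub_apply, smul_eq_mul]
          ring
        have hvnn : ∀ i, 0 ≤ PolyEmbed.vert b i := by
          intro i
          simp only [PolyEmbed.vert, Pi.single_apply]
          split <;> norm_num
        have hnn : ∀ i, 0 ≤ f t i := by
          intro i
          rw [hco]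
          have h1 := mul_nonneg (by linarith : (0:ℝ) ≤ 1 - t) (hxP.1 i)
          have h2 := mul_nonneg ht0.le (hvnn i)
          linarith
        have hsum : ∑ i, f t i = 1 := by
          simp only [hco]
          rw [Finset.sum_add_distrib, ← Finset.mul_sum, ← Finset.mul_sum, hxP.2.1,
            (PolyEmbed.vert_mem_Pset b).2.1]
          ring
        have hsuppsub : ∀ a : A, 0 < f t (PolyEmbed.eqv A a) →
            a ∈ insert b {a : A | 0 < x (PolyEmbed.eqv A a)} := by
          intro a ha
          rcases eq_or_ne a b with rfl | hab
          · exact Set.mem_insert _ _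
          refine Set.mem_insert_of_mem _ ?_
          rw [hco] at ha
          have hv0 : PolyEmbed.vert b (PolyEmbed.eqv A a) = 0 := by
            simp only [PolyEmbed.vert, Pi.single_apply]
            rw [if_neg (fun h => hab ((PolyEmbed.eqv A).injective h))]
          rw [hv0, mul_zero, add_zero] at ha
          rcases (hxP.1 (PolyEmbed.eqv A a)).lt_or_eq with h | h
          · exact h
          · exfalso; rw [← h, mul_zero] at ha; exact lt_irrefl _ ha
        have hmemP : f t ∈ PolyEmbed.Pset A :=
          ⟨hnn, hsum, hchain.mono (fun a ha => hsuppsub a ha)⟩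
        have hfb : 0 < f t (PolyEmbed.eqv A b) := by
          rw [hco]
          have h1 : PolyEmbed.vert b (PolyEmbed.eqv A b) = 1 := by
            simp [PolyEmbed.vert]
          rw [h1]
          have h2 := mul_nonneg (by linarith : (0:ℝ) ≤ 1 - t) (hxP.1 (PolyEmbed.eqv A b))
          linarith
        refine ⟨hmemP, PolyEmbed.mx_eq hmemP hfb ?_⟩
        intro c hc
        rcases Set.mem_insert_iff.1 (hsuppsub c hc) with rfl | hc'
        · exact le_rfl
        · exact ((PolyEmbed.mx_spec hxP).2 c hc').trans hb
      have hcont : Continuous f := by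
        exact continuous_const.add (continuous_id.smul continuous_const)
      have hT : Filter.Tendsto f (nhdsWithin 0 (Set.Ioi 0)) (nhds x) := by
        have hf0 : f 0 = x := by simp [hf]
        exact hf0 ▸ ((hcont.tendsto 0).mono_left nhdsWithin_le_nhds)
      have hev1 : ∀ᶠ t in nhdsWithin (0:ℝ) (Set.Ioi 0), f t ∈ U₀ :=
        hT.eventually (hU₀.eventually_mem hxU₀)
      have hev2 : ∀ᶠ t in nhdsWithin (0:ℝ) (Set.Ioi 0), t ∈ Set.Ioo (0:ℝ) 1 :=
        Filter.eventually_of_mem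
          (Ioo_mem_nhdsGT_of_mem (by norm_num : (0:ℝ) ∈ Set.Ico (0:ℝ) 1))
          (fun _ h => h)
      obtain ⟨t, htU₀, htIoo⟩ := (hev1.and hev2).exists
      obtain ⟨htP, htmx⟩ := hfP t htIoo
      rcases hPU₀ ⟨htP, htU₀⟩ with h | h
      · exact h.2 ⟨htP, htmx ▸ hbU⟩
      · exact hbV (htmx ▸ h.2)
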